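/- Let Q be a lower transition rate operator on a finite nonempty set 𝒳, and let (T_t)_{t≥0} be the associated family of operators determined by the differential equation d/dt T_t f = Q(T_t f) with T_0 f = f. Then for any t > 0, Q is ergodic if and only if the lower transition operator T_t is 1-step absorbing. -/

import Mathlib

open scoped Classical


open Filter Topology

/-- The minimum of a real-valued function on a finite nonempty type. -/
noncomputable def minf {X : Type*} [Fintype X] [Nonempty X] (f : X → ℝ) : ℝ :=
  Finset.univ.inf' Finset.univ_nonempty f

/-- The maximum of a real-valued function on a finite nonempty type. -/
noncomputable def maxf {X : Type*} [Fintype X] [Nonempty X] (f : X → ℝ) : ℝ :=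
  Finset.univ.sup' Finset.univ_nonempty f

/-- The (real-valued) indicator function of a set. -/
noncomputable def ind {X : Type*} (A : Set X) : X → ℝ := A.indicator 1

/-- The conjugate (upper) operator `f ↦ -(Q (-f))`. -/
def conjOp {X : Type*} (Q : (X → ℝ) → (X → ℝ)) : (X → ℝ) → (X → ℝ) :=
  fun f => -(Q (-f))

/-- A lower transition rate operator. -/
def IsLTRO {X : Type*} [Fintype X] (Q : (X → ℝ) → (X → ℝ)) : Prop :=
  (∀ μ : ℝ, Q (fun _ => μ) = 0) ∧
  (∀ f g : X → ℝ, Q f + Q g ≤ Q (f + g)) ∧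
  (∀ l : ℝ, 0 ≤ l → ∀ f : X → ℝ, Q (l • f) = l • Q f) ∧
  (∀ x y : X, x ≠ y → 0 ≤ Q (ind {y}) x)

/-- A lower transition operator. -/
def IsLTO {X : Type*} [Fintype X] [Nonempty X] (T : (X → ℝ) → (X → ℝ)) : Prop :=
  (∀ f : X → ℝ, ∀ x : X, minf f ≤ T f x) ∧
  (∀ f g : X → ℝ, T f + T g ≤ T (f + g)) ∧
  (∀ l : ℝ, 0 ≤ l → ∀ f : X → ℝ, T (l • f) = l • T f)

/-- `T` is the family of operators solving `d/dt T_t f = Q (T_t f)` on `[0,∞)`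
with `T_0 f = f`. -/
def IsSol {X : Type*} [Fintype X] (Q : (X → ℝ) → (X → ℝ))
    (T : ℝ → (X → ℝ) → (X → ℝ)) : Prop :=
  (∀ f : X → ℝ, T 0 f = f) ∧
  (∀ f : X → ℝ, ∀ t : ℝ, 0 ≤ t →
    HasDerivWithinAt (fun s => T s f) (Q (T t f)) (Set.Ici 0) t)

/-- Ergodicity of a lower transition rate operator, expressed via its
associated time-dependent family `T`. -/
def ErgodicQ {X : Type*} [Fintype X] (T : ℝ → (X → ℝ) → (X → ℝ)) : Prop :=
  ∀ f : X → ℝ, ∃ c : ℝ, Tendsto (fun t => T t f) atTop (𝓝 (fun _ : X => c))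

/-- Ergodicity of a lower transition operator. -/
def ErgodicT {X : Type*} [Fintype X] (T : (X → ℝ) → (X → ℝ)) : Prop :=
  ∀ f : X → ℝ, ∃ c : ℝ, Tendsto (fun n : ℕ => T^[n] f) atTop (𝓝 (fun _ : X => c))

/-- `x` is upper reachable from `y` (w.r.t. the lower transition rate operator `Q`). -/
def upperReach {X : Type*} [Fintype X] (Q : (X → ℝ) → (X → ℝ)) (y x : X) : Prop :=
  ∃ (n : ℕ) (p : ℕ → X), p 0 = y ∧ p n = x ∧
    ∀ k : ℕ, k < n → p (k + 1) ≠ p k ∧ 0 < conjOp Q (ind {p (k + 1)}) (p k)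

/-- One step of the lower-reachability construction: `A ↦ A ∪ {y ∉ A : Q(𝟙_A)(y) > 0}`. -/
def lowerStep {X : Type*} [Fintype X] (Q : (X → ℝ) → (X → ℝ)) (A : Set X) : Set X :=
  A ∪ {y : X | y ∉ A ∧ 0 < Q (ind A) y}

/-- `A` is lower reachable from `x`: `x ∈ Aₙ` where `n` is the first index with
`Aₙ = Aₙ₊₁` (equivalently, any such index, since the sequence is determined by
recursion and increasing). -/
def lowerReach {X : Type*} [Fintype X] (Q : (X → ℝ) → (X → ℝ)) (x : X) (A : Set X) : Prop :=
  ∃ n : ℕ, (lowerStep Q)^[n] A = (lowerStep Q)^[n + 1] A ∧ x ∈ (lowerStep Q)^[n] A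

/-- The set `𝒳_RA := {x : ∃ n ≥ 1, min T̄ⁿ 𝟙ₓ > 0}`. -/
noncomputable def XRA {X : Type*} [Fintype X] [Nonempty X]
    (T : (X → ℝ) → (X → ℝ)) : Set X :=
  {x : X | ∃ n : ℕ, 0 < minf ((conjOp T)^[n + 1] (ind {x}))}

/-- A regularly absorbing lower transition operator. -/
def RegAbs {X : Type*} [Fintype X] [Nonempty X] (T : (X → ℝ) → (X → ℝ)) : Prop :=
  (XRA T).Nonempty ∧ ∀ x : X, x ∉ XRA T → ∃ n : ℕ, 0 < T^[n + 1] (ind (XRA T)) x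

/-- The set `𝒳_1A := {x : min T̄ 𝟙ₓ > 0}`. -/
noncomputable def X1A {X : Type*} [Fintype X] [Nonempty X]
    (T : (X → ℝ) → (X → ℝ)) : Set X :=
  {x : X | 0 < minf (conjOp T (ind {x}))}

/-- A 1-step absorbing lower transition operator. -/
def OneStepAbs {X : Type*} [Fintype X] [Nonempty X] (T : (X → ℝ) → (X → ℝ)) : Prop :=
  (X1A T).Nonempty ∧ ∀ x : X, x ∉ X1A T → 0 < T (ind (X1A T)) x

/-- The operator (sup) norm of a non-negatively homogeneous operator. -/
noncomputable def opN {X : Type*} [Fintype X] (Q : (X → ℝ) → (X → ℝ)) : ℝ :=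
  sSup {r : ℝ | ∃ f : X → ℝ, ‖f‖ = 1 ∧ r = ‖Q f‖}

section Prelim
variable {X : Type*} [Fintype X] [Nonempty X]

lemma ind_apply (A : Set X) (x : X) : ind A x = if x ∈ A then 1 else 0 := by
  simp [ind, Set.indicator_apply]

lemma ind_of_mem {A : Set X} {x : X} (h : x ∈ A) : ind A x = 1 := by simp [ind_apply, h]

lemma ind_of_not_mem {A : Set X} {x : X} (h : x ∉ A) : ind A x = 0 := by simp [ind_apply, h]

lemma ind_nonneg (A : Set X) : (0 : X → ℝ) ≤ ind A := by
  intro x; rw [Pi.zero_apply, ind_apply]; split <;> norm_num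

lemma ind_le_one (A : Set X) : ind A ≤ fun _ => (1:ℝ) := by
  intro x; rw [ind_apply]; split <;> norm_num

lemma ind_mono {A B : Set X} (h : A ⊆ B) : ind A ≤ ind B := by
  intro x; rw [ind_apply, ind_apply]
  by_cases hx : x ∈ A
  · simp [hx, h hx]
  · simp [hx]; split <;> norm_num

lemma sum_ind_single : (∑ z : X, ind {z}) = fun _ => (1:ℝ) := by
  funext x
  rw [Finset.sum_apply]
  have : ∀ z : X, ind ({z} : Set X) x = if z = x then 1 else 0 := by
    intro z; rw [ind_apply]; simp [eq_comm]
  simp only [this]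
  simp

lemma minf_le (f : X → ℝ) (x : X) : minf f ≤ f x := Finset.inf'_le _ (Finset.mem_univ x)

lemma le_maxf (f : X → ℝ) (x : X) : f x ≤ maxf f := Finset.le_sup' _ (Finset.mem_univ x)

lemma exists_minf (f : X → ℝ) : ∃ x, minf f = f x := by
  obtain ⟨x, _, hx⟩ := Finset.exists_mem_eq_inf' (Finset.univ_nonempty (α := X)) f
  exact ⟨x, hx⟩

lemma exists_maxf (f : X → ℝ) : ∃ x, maxf f = f x := by
  obtain ⟨x, _, hx⟩ := Finset.exists_mem_eq_sup' (Finset.univ_nonempty (α := X)) f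
  exact ⟨x, hx⟩

lemma le_minf {f : X → ℝ} {c : ℝ} (h : ∀ x, c ≤ f x) : c ≤ minf f :=
  Finset.le_inf' _ _ fun x _ => h x

lemma maxf_le {f : X → ℝ} {c : ℝ} (h : ∀ x, f x ≤ c) : maxf f ≤ c :=
  Finset.sup'_le _ _ fun x _ => h x

lemma minf_const (c : ℝ) : minf (fun _ : X => c) = c := Finset.inf'_const _ _

lemma maxf_const (c : ℝ) : maxf (fun _ : X => c) = c := Finset.sup'_const _ _

lemma minf_neg (f : X → ℝ) : minf (-f) = -maxf f := by
  apply le_antisymm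
  · obtain ⟨x, hx⟩ := exists_maxf f
    calc minf (-f) ≤ (-f) x := minf_le _ _
    _ = -maxf f := by rw [hx]; simp
  · exact le_minf fun x => by simp [neg_le_neg (le_maxf f x)]

lemma minf_mono {f g : X → ℝ} (h : f ≤ g) : minf f ≤ minf g := by
  obtain ⟨x, hx⟩ := exists_minf g
  rw [hx]; exact le_trans (minf_le f x) (h x)

lemma maxf_mono {f g : X → ℝ} (h : f ≤ g) : maxf f ≤ maxf g := by
  obtain ⟨x, hx⟩ := exists_maxf f
  rw [hx]; exact le_trans (h x) (le_maxf g x)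

lemma abs_apply_le_norm (f : X → ℝ) (x : X) : |f x| ≤ ‖f‖ := by
  have := norm_le_pi_norm f x
  simpa [Real.norm_eq_abs] using this

lemma pi_norm_le' {f : X → ℝ} {C : ℝ} (hC : 0 ≤ C) (h : ∀ x, |f x| ≤ C) : ‖f‖ ≤ C := by
  rw [pi_norm_le_iff_of_nonneg hC]
  intro x; simpa [Real.norm_eq_abs] using h x

lemma minf_lip (u v : X → ℝ) : |minf u - minf v| ≤ ‖u - v‖ := by
  rw [abs_sub_le_iff]
  constructor
  · obtain ⟨x, hx⟩ := exists_minf v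
    have h1 : minf u ≤ u x := minf_le u x
    have h2 : u x - v x ≤ ‖u - v‖ := le_trans (le_abs_self _) (by
      have := abs_apply_le_norm (u - v) x; simpa using this)
    rw [hx]; linarith
  · obtain ⟨x, hx⟩ := exists_minf u
    have h1 : minf v ≤ v x := minf_le v x
    have h2 : v x - u x ≤ ‖u - v‖ := le_trans (le_abs_self _) (by
      have := abs_apply_le_norm (u - v) x
      rw [abs_sub_comm] at *
      simpa [abs_sub_comm] using this)
    rw [hx]; linarith

lemma maxf_lip (u v : X → ℝ) : |maxf u - maxf v| ≤ ‖u - v‖ := by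
  have h := minf_lip (-u) (-v)
  rw [minf_neg, minf_neg, show -u - -v = -(u - v) from by ring, norm_neg] at h
  rw [show maxf u - maxf v = -(-maxf u - -maxf v) from by ring, abs_neg]
  exact h

end Prelim

section Master
variable {X : Type*} [Fintype X]

private lemma continuousOn_sup' {A : Finset X} (hA : A.Nonempty) {t : Set ℝ}
    {F : ℝ → X → ℝ} (h : ∀ x ∈ A, ContinuousOn (fun r => F r x) t) :
    ContinuousOn (fun r => A.sup' hA (F r)) t := by
  induction hA using Finset.Nonempty.cons_induction with
  | singleton a => simpa using h a (by simp)
  | cons a s ha hs ih =>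
    have heq : (fun r => (Finset.cons a s ha).sup' (Finset.cons_nonempty ha) (F r))
        = fun r => max (F r a) (s.sup' hs (F r)) := by
      funext r
      exact Finset.sup'_cons hs (f := F r)
    rw [heq]
    intro r hr
    exact Filter.Tendsto.max (h a (by simp) r hr) (ih (fun x hx => h x (by simp [hx])) r hr)

/-- Master Grönwall/Dini lemma for the sup over a finite family with right derivatives. -/
lemma sup'_le_gronwall {u u' : ℝ → X → ℝ} {A : Finset X} (hA : A.Nonempty) {δ K ε : ℝ}
    (hu : ∀ x ∈ A, ∀ s, 0 ≤ s → HasDerivWithinAt (fun r => u r x) (u' s x) (Set.Ici 0) s)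
    (h0 : ∀ x ∈ A, u 0 x ≤ δ)
    (bound : ∀ s, 0 ≤ s → ∀ x ∈ A, (∀ y ∈ A, u s y ≤ u s x) → u' s x ≤ K * u s x + ε) :
    ∀ s, 0 ≤ s → A.sup' hA (u s) ≤ gronwallBound δ K ε s := by
  intro b hb
  set φ : ℝ → ℝ := fun r => A.sup' hA (u r) with hφ
  have cont : ContinuousOn φ (Set.Icc 0 b) := by
    apply continuousOn_sup' hA
    intro x hx s hs
    exact ((hu x hx s hs.1).continuousWithinAt).mono (fun y hy => hy.1)
  have key := le_gronwallBound_of_liminf_deriv_right_le (f := φ)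
      (f' := fun r => K * φ r + ε) (δ := δ) (K := K) (ε := ε) (a := 0) (b := b) cont
      ?_ ?_ ?_ b ⟨hb, le_refl b⟩
  · rwa [sub_zero] at key
  · -- slope condition
    intro s hs r hr
    apply Filter.Eventually.frequently
    have hev : ∀ x ∈ A, ∀ᶠ z in 𝓝[>] s, u z x < φ s + r * (z - s) := by
      intro x hx
      by_cases hcon : u s x = φ s
      · -- contact point: use the derivative
        have hargmax : ∀ y ∈ A, u s y ≤ u s x := by
          intro y hy; rw [hcon]; exact Finset.le_sup' _ hy
        have hr' : K * φ s + ε < r := by simpa using hr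
        have hder : u' s x < r := lt_of_le_of_lt (bound s hs.1 x hx hargmax) (by rw [hcon]; exact hr')
        have hslope : Tendsto (slope (fun r => u r x) s) (𝓝[>] s) (𝓝 (u' s x)) := by
          have h1 := (hu x hx s hs.1).mono (Set.Ici_subset_Ici.mpr hs.1)
          rw [hasDerivWithinAt_iff_tendsto_slope] at h1
          rwa [Set.Ici_sdiff_left] at h1
        have : ∀ᶠ z in 𝓝[>] s, slope (fun r => u r x) s z < r :=
          hslope (Iio_mem_nhds hder)
        filter_upwards [this, self_mem_nhdsWithin] with z hz hz'
        rw [Set.mem_Ioi] at hz'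
        rw [slope_def_field, div_lt_iff₀ (by linarith)] at hz
        rw [← hcon]; linarith
      · -- non-contact: continuity
        have hlt : u s x < φ s := lt_of_le_of_ne (Finset.le_sup' _ hx) hcon
        have hc : Tendsto (fun z => u z x) (𝓝[>] s) (𝓝 (u s x)) := by
          exact ((hu x hx s hs.1).continuousWithinAt).mono
            (show Set.Ioi s ⊆ Set.Ici 0 from fun y hy => le_trans hs.1 (le_of_lt hy))
        have hc2 : Tendsto (fun z => φ s + r * (z - s)) (𝓝[>] s) (𝓝 (φ s)) := by
          have : Tendsto (fun z : ℝ => φ s + r * (z - s)) (𝓝 s) (𝓝 (φ s + r * (s - s))) := by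
            apply Tendsto.const_add
            exact (tendsto_id.sub_const s).const_mul r
          simpa using this.mono_left nhdsWithin_le_nhds
        have h1 : ∀ᶠ z in 𝓝[>] s, u z x < (u s x + φ s) / 2 :=
          hc (Iio_mem_nhds (by linarith))
        have h2 : ∀ᶠ z in 𝓝[>] s, (u s x + φ s) / 2 < φ s + r * (z - s) :=
          hc2 (Ioi_mem_nhds (by linarith))
        filter_upwards [h1, h2] with z hz1 hz2
        linarith
    have := (Finset.eventually_all A).mpr hev
    filter_upwards [this, self_mem_nhdsWithin] with z hz hz'
    rw [Set.mem_Ioi] at hz'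
    have hzφ : φ z < φ s + r * (z - s) := by
      rw [hφ]; rw [Finset.sup'_lt_iff]
      exact fun x hx => hz x hx
    rw [inv_mul_lt_iff₀ (by linarith)]
    linarith
  · exact Finset.sup'_le _ _ fun x hx => h0 x hx
  · intro x _; exact le_refl _

lemma gronwallBound_zero3 (s : ℝ) : gronwallBound 0 0 0 s = 0 := by simp [gronwallBound]

end Master

section QFacts
variable {X : Type*} [Fintype X] [Nonempty X] {Q : (X → ℝ) → (X → ℝ)}

/-- Bound on the diagonal rates. -/
noncomputable def CQ (Q : (X → ℝ) → (X → ℝ)) : ℝ :=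
  max (maxf (fun z => -(Q (ind {z}) z))) 0

/-- Lipschitz bound for `Q`. -/
noncomputable def KQc (Q : (X → ℝ) → (X → ℝ)) : ℝ :=
  ∑ z : X, (‖Q (ind {z})‖ + ‖Q (-(ind {z}))‖)

lemma CQ_nonneg : 0 ≤ CQ Q := le_max_right _ _

lemma KQc_nonneg : 0 ≤ KQc Q :=
  Finset.sum_nonneg fun z _ => add_nonneg (norm_nonneg _) (norm_nonneg _)

variable (hQ : IsLTRO Q)
include hQ

lemma Qzero : Q 0 = 0 := hQ.1 0

lemma Qsuper (f g : X → ℝ) : Q f + Q g ≤ Q (f + g) := hQ.2.1 f g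

lemma Qsmul {l : ℝ} (hl : 0 ≤ l) (f : X → ℝ) : Q (l • f) = l • Q f := hQ.2.2.1 l hl f

lemma Qoff {x y : X} (h : x ≠ y) : 0 ≤ Q (ind {y}) x := hQ.2.2.2 x y h

lemma Qconst_add (f : X → ℝ) (c : ℝ) : Q (f + fun _ => c) = Q f := by
  apply le_antisymm
  · have h := Qsuper hQ (f + fun _ => c) (fun _ => -c)
    rw [hQ.1 (-c)] at h
    have he : (f + fun _ => c) + (fun _ => -c) = f := by funext x; simp
    rw [he] at h
    simpa using h
  · have h := Qsuper hQ f (fun _ => c)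
    rw [hQ.1 c] at h
    simpa using h

lemma Qsum_ge {ι : Type*} (s : Finset ι) (c : ι → ℝ) (g : ι → X → ℝ)
    (hc : ∀ i ∈ s, 0 ≤ c i) :
    ∑ i ∈ s, c i • Q (g i) ≤ Q (∑ i ∈ s, c i • g i) := by
  induction s using Finset.cons_induction with
  | empty => simp [Qzero hQ]
  | cons a s ha ih =>
    rw [Finset.sum_cons, Finset.sum_cons]
    calc c a • Q (g a) + ∑ i ∈ s, c i • Q (g i)
        ≤ c a • Q (g a) + Q (∑ i ∈ s, c i • g i) := by
          have := ih (fun i hi => hc i (Finset.mem_cons_of_mem hi))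
          exact add_le_add (le_refl _) this
      _ = Q (c a • g a) + Q (∑ i ∈ s, c i • g i) := by
          rw [Qsmul hQ (hc a (Finset.mem_cons_self a s))]
      _ ≤ Q (c a • g a + ∑ i ∈ s, c i • g i) := Qsuper hQ _ _

omit hQ in
lemma sum_smul_ind (h : X → ℝ) : (∑ z : X, h z • ind {z}) = h := by
  funext w
  rw [Finset.sum_apply]
  have : ∀ z : X, (h z • ind ({z} : Set X)) w = if z = w then h z else 0 := by
    intro z
    rw [Pi.smul_apply, ind_apply, smul_eq_mul]
    by_cases hz : w ∈ ({z} : Set X)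
    · simp at hz; simp [hz]
    · simp at hz; simp [hz, Ne.symm hz]
  simp only [this]
  simp

lemma Q_ge_sum_ind (h : X → ℝ) (hh : (0:X→ℝ) ≤ h) (x : X) :
    ∑ z : X, h z * Q (ind {z}) x ≤ Q h x := by
  have := Qsum_ge hQ Finset.univ h (fun z => ind {z}) (fun i _ => hh i)
  rw [sum_smul_ind] at this
  have h2 := this x
  rw [Finset.sum_apply] at h2
  simpa using h2

omit hQ in
lemma Q_ind_diag (z : X) : -(CQ Q) ≤ Q (ind {z}) z := by
  have h1 : -(Q (ind {z}) z) ≤ CQ Q :=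
    le_trans (le_maxf (fun w => -(Q (ind {w}) w)) z) (le_max_left _ _)
  linarith

omit hQ in
lemma maxf_le' {f : X → ℝ} {c : ℝ} (h : ∀ x, f x ≤ c) : maxf f ≤ c := maxf_le h

lemma Q_ge_neg (h : X → ℝ) (hh : (0:X→ℝ) ≤ h) (x : X) : -(CQ Q * h x) ≤ Q h x := by
  have h1 := Q_ge_sum_ind hQ h hh x
  have h2 : h x * Q (ind {x}) x ≤ ∑ z : X, h z * Q (ind {z}) x := by
    have := Finset.sum_erase_add Finset.univ (fun z => h z * Q (ind {z}) x) (Finset.mem_univ x)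
    beta_reduce at this
    rw [← this]
    have hpos : 0 ≤ ∑ z ∈ Finset.univ.erase x, h z * Q (ind {z}) x := by
      apply Finset.sum_nonneg
      intro z hz
      have hzx : z ≠ x := Finset.ne_of_mem_erase hz
      exact mul_nonneg (hh z) (Qoff hQ (Ne.symm hzx))
    linarith
  have h3 : -(CQ Q * h x) ≤ h x * Q (ind {x}) x := by
    have := mul_le_mul_of_nonneg_left (Q_ind_diag (Q := Q) x) (hh x)
    calc -(CQ Q * h x) = h x * (-(CQ Q)) := by ring
    _ ≤ h x * Q (ind {x}) x := this
  linarith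

lemma Qpos_min (h : X → ℝ) (hh : (0:X→ℝ) ≤ h) {x : X} (hx : h x = 0) : 0 ≤ Q h x := by
  have := Q_ge_neg hQ h hh x
  rw [hx] at this
  simpa using this

lemma Q_le_conj (f : X → ℝ) : Q f ≤ conjOp Q f := by
  intro x
  have h := Qsuper hQ f (-f)
  rw [show f + -f = 0 by funext y; simp, Qzero hQ] at h
  have := h x
  simp only [Pi.add_apply, Pi.zero_apply] at this
  simp only [conjOp, Pi.neg_apply]
  linarith

lemma conj_neg_max (h : X → ℝ) (hh : h ≤ (0:X→ℝ)) {x : X} (hx : h x = 0) :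
    conjOp Q h x ≤ 0 := by
  have h1 : 0 ≤ Q (-h) x := by
    apply Qpos_min hQ
    · intro y; simpa using hh y
    · simp [hx]
  simp only [conjOp, Pi.neg_apply]
  linarith

lemma conj_const_add (f : X → ℝ) (c : ℝ) : conjOp Q (f + fun _ => c) = conjOp Q f := by
  simp only [conjOp]
  rw [show -(f + fun _ => c) = -f + fun _ => -c from by funext y; simp; ring, Qconst_add hQ]

lemma conj_max_le (u : X → ℝ) (x : X) (hmax : ∀ y, u y ≤ u x) : conjOp Q u x ≤ 0 := by
  have key : u = (u - fun _ => u x) + fun _ => u x := by funext y; simp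
  rw [key, conj_const_add hQ]
  apply conj_neg_max hQ
  · intro y; simp [hmax y]
  · simp

lemma Qsub_le (f g : X → ℝ) : Q f - Q g ≤ conjOp Q (f - g) := by
  intro x
  have h := Qsuper hQ f (g - f)
  rw [show f + (g - f) = g by funext y; simp] at h
  have := h x
  simp only [Pi.add_apply, Pi.sub_apply] at this ⊢
  simp only [conjOp, Pi.neg_apply, show -(f - g) = g - f by funext y; simp]
  linarith

lemma Qsub_ge (f g : X → ℝ) : Q (f - g) ≤ Q f - Q g := by
  intro x
  have h := Qsuper hQ g (f - g)
  rw [show g + (f - g) = f by funext y; simp] at h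
  have := h x
  simp only [Pi.add_apply, Pi.sub_apply] at this ⊢
  linarith

lemma conj_smul {l : ℝ} (hl : 0 ≤ l) (f : X → ℝ) : conjOp Q (l • f) = l • conjOp Q f := by
  simp only [conjOp]
  rw [show -(l • f) = l • (-f) by funext y; simp, Qsmul hQ hl]
  funext y; simp

lemma conj_subadd (f g : X → ℝ) : conjOp Q (f + g) ≤ conjOp Q f + conjOp Q g := by
  intro x
  have h := Qsuper hQ (-f) (-g)
  rw [show -f + -g = -(f + g) from by funext y; simp; ring] at h
  have := h x
  simp only [Pi.add_apply, Pi.neg_apply, conjOp] at this ⊢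
  linarith

lemma conj_sum_le {ι : Type*} (s : Finset ι) (g : ι → X → ℝ) :
    conjOp Q (∑ i ∈ s, g i) ≤ ∑ i ∈ s, conjOp Q (g i) := by
  induction s using Finset.cons_induction with
  | empty =>
    simp only [Finset.sum_empty]
    intro x
    simp [conjOp, Qzero hQ]
  | cons a s ha ih =>
    rw [Finset.sum_cons, Finset.sum_cons]
    calc conjOp Q (g a + ∑ i ∈ s, g i) ≤ conjOp Q (g a) + conjOp Q (∑ i ∈ s, g i) :=
          conj_subadd hQ _ _
    _ ≤ conjOp Q (g a) + ∑ i ∈ s, conjOp Q (g i) := add_le_add (le_refl _) ih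

lemma conj_off {x y : X} (h : x ≠ y) : 0 ≤ conjOp Q (ind {y}) x :=
  le_trans (Qoff hQ h) (Q_le_conj hQ _ x)

lemma conj_ind_nonpos {A : Set X} {v : X} (h : ∀ w ∈ A, conjOp Q (ind {w}) v ≤ 0) :
    conjOp Q (ind A) v ≤ 0 := by
  have hrw : ind A = ∑ z : X, ind A z • ind {z} := (sum_smul_ind (ind A)).symm
  rw [hrw]
  have hsum := conj_sum_le hQ Finset.univ (fun z => ind A z • ind {z}) v
  rw [Finset.sum_apply] at hsum
  refine le_trans hsum (Finset.sum_nonpos ?_)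
  intro z _
  rw [conj_smul hQ (by have := ind_nonneg A z; simpa using this)]
  by_cases hz : z ∈ A
  · rw [Pi.smul_apply, smul_eq_mul, ind_of_mem hz, one_mul]
    exact h z hz
  · rw [Pi.smul_apply, smul_eq_mul, ind_of_not_mem hz, zero_mul]

lemma Q_ge_neg_norm (h : X → ℝ) (x : X) : -(KQc Q * ‖h‖) ≤ Q h x := by
  set u : X → ℝ := fun z => max (h z) 0 with hu
  set v : X → ℝ := fun z => max (-(h z)) 0 with hv
  have hdec : h = u + (-v) := by
    funext z; simp only [Pi.add_apply, Pi.neg_apply, hu, hv]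
    rcases le_total (h z) 0 with hz | hz
    · rw [max_eq_right hz, max_eq_left (by linarith)]; ring
    · rw [max_eq_left hz, max_eq_right (by linarith)]; ring
  have h1 : Q u + Q (-v) ≤ Q h := by rw [hdec]; exact Qsuper hQ _ _
  have h2 : ∑ z : X, u z • Q (ind {z}) ≤ Q u := by
    have := Qsum_ge hQ Finset.univ u (fun z => ind {z}) (fun i _ => le_max_right _ _)
    rwa [sum_smul_ind] at this
  have h3 : ∑ z : X, v z • Q (-(ind {z})) ≤ Q (-v) := by
    have := Qsum_ge hQ Finset.univ v (fun z => -(ind {z})) (fun i _ => le_max_right _ _)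
    have he : (∑ z : X, v z • -(ind {z})) = -v := by
      have : (∑ z : X, v z • -(ind {z})) = -(∑ z : X, v z • ind {z}) := by
        rw [← Finset.sum_neg_distrib]
        congr 1; funext z; funext w; simp
      rw [this, sum_smul_ind]
    rwa [he] at this
  have hb : ∀ z : X, -(‖h‖ * (‖Q (ind {z})‖ + ‖Q (-(ind {z}))‖)) ≤
      u z * Q (ind {z}) x + v z * Q (-(ind {z})) x := by
    intro z
    have hu1 : 0 ≤ u z := le_max_right _ _
    have hv1 : 0 ≤ v z := le_max_right _ _
    have hu2 : u z ≤ ‖h‖ := le_trans (max_le (le_abs_self _) (abs_nonneg _)) (abs_apply_le_norm h z)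
    have hv2 : v z ≤ ‖h‖ := le_trans (max_le (neg_le_abs _) (abs_nonneg _)) (abs_apply_le_norm h z)
    have e1 : -(u z * ‖Q (ind {z})‖) ≤ u z * Q (ind {z}) x := by
      have := abs_apply_le_norm (Q (ind {z})) x
      have h' : -(‖Q (ind {z})‖) ≤ Q (ind {z}) x := by
        have := neg_abs_le (Q (ind {z}) x); linarith
      calc -(u z * ‖Q (ind {z})‖) = u z * (-(‖Q (ind {z})‖)) := by ring
      _ ≤ u z * Q (ind {z}) x := mul_le_mul_of_nonneg_left h' hu1
    have e2 : -(v z * ‖Q (-(ind {z}))‖) ≤ v z * Q (-(ind {z})) x := by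
      have := abs_apply_le_norm (Q (-(ind {z}))) x
      have h' : -(‖Q (-(ind {z}))‖) ≤ Q (-(ind {z})) x := by
        have := neg_abs_le (Q (-(ind {z})) x); linarith
      calc -(v z * ‖Q (-(ind {z}))‖) = v z * (-(‖Q (-(ind {z}))‖)) := by ring
      _ ≤ v z * Q (-(ind {z})) x := mul_le_mul_of_nonneg_left h' hv1
    have e3 : u z * ‖Q (ind {z})‖ ≤ ‖h‖ * ‖Q (ind {z})‖ :=
      mul_le_mul_of_nonneg_right hu2 (norm_nonneg _)
    have e4 : v z * ‖Q (-(ind {z}))‖ ≤ ‖h‖ * ‖Q (-(ind {z}))‖ :=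
      mul_le_mul_of_nonneg_right hv2 (norm_nonneg _)
    nlinarith [norm_nonneg (Q (ind {z})), norm_nonneg (Q (-(ind {z})))]
  calc -(KQc Q * ‖h‖) = ∑ z : X, -(‖h‖ * (‖Q (ind {z})‖ + ‖Q (-(ind {z}))‖)) := by
        rw [KQc, Finset.sum_mul, ← Finset.sum_neg_distrib]
        apply Finset.sum_congr rfl
        intro z _; ring
  _ ≤ ∑ z : X, (u z * Q (ind {z}) x + v z * Q (-(ind {z})) x) :=
      Finset.sum_le_sum fun z _ => hb z
  _ = (∑ z : X, u z • Q (ind {z})) x + (∑ z : X, v z • Q (-(ind {z}))) x := by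
      rw [Finset.sum_apply, Finset.sum_apply, ← Finset.sum_add_distrib]
      congr 1
  _ ≤ Q u x + Q (-v) x := add_le_add (h2 x) (h3 x)
  _ ≤ Q h x := h1 x

lemma Q_abs_le (h : X → ℝ) (x : X) : |Q h x| ≤ KQc Q * ‖h‖ := by
  rw [abs_le]
  constructor
  · have := Q_ge_neg_norm hQ h x; linarith
  · have h1 : Q h x ≤ conjOp Q h x := Q_le_conj hQ h x
    have h2 := Q_ge_neg_norm hQ (-h) x
    rw [norm_neg] at h2
    simp only [conjOp, Pi.neg_apply] at h1
    linarith

lemma Qlip : LipschitzWith (Real.toNNReal (KQc Q)) Q := by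
  apply LipschitzWith.of_dist_le_mul
  intro f g
  rw [dist_eq_norm, dist_eq_norm, Real.coe_toNNReal _ KQc_nonneg]
  apply pi_norm_le' (mul_nonneg KQc_nonneg (norm_nonneg _))
  intro x
  rw [abs_le]
  have hl : Q (f - g) x ≤ Q f x - Q g x := by
    have := Qsub_ge hQ f g x
    simpa using this
  have hu : Q f x - Q g x ≤ -(Q (g - f) x) := by
    have := Qsub_le hQ f g x
    simp only [conjOp, Pi.neg_apply, Pi.sub_apply,
      show -(f - g) = g - f from by funext y; simp] at this
    simpa using this
  constructor
  · have := Q_ge_neg_norm hQ (f - g) x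
    have he : (Q f - Q g) x = Q f x - Q g x := rfl
    simp only [Pi.sub_apply]
    linarith
  · have := Q_ge_neg_norm hQ (g - f) x
    have hn : ‖g - f‖ = ‖f - g‖ := by rw [show g - f = -(f - g) from by funext y; simp, norm_neg]
    rw [hn] at this
    simp only [Pi.sub_apply]
    linarith

end QFacts

section Sol
variable {X : Type*} [Fintype X] [Nonempty X] {Q : (X → ℝ) → (X → ℝ)}
  {T : ℝ → (X → ℝ) → (X → ℝ)} (hQ : IsLTRO Q) (hT : IsSol Q T)

include hT

lemma Tderiv_coord (f : X → ℝ) (x : X) (s : ℝ) (hs : 0 ≤ s) :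
    HasDerivWithinAt (fun r => T r f x) (Q (T s f) x) (Set.Ici 0) s := by
  have h := (ContinuousLinearMap.proj (R := ℝ) (φ := fun _ : X => ℝ) x).hasFDerivAt.comp_hasDerivWithinAt
    s (hT.2 f s hs)
  exact h

lemma TcontOn (f : X → ℝ) {a b : ℝ} (ha : 0 ≤ a) :
    ContinuousOn (fun s => T s f) (Set.Icc a b) := by
  intro s hs
  exact ((hT.2 f s (le_trans ha hs.1)).continuousWithinAt).mono
    (fun y hy => le_trans ha hy.1)

include hQ

lemma sol_unique {f : X → ℝ} {g : ℝ → X → ℝ} (hg0 : g 0 = f)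
    (hg : ∀ s, 0 ≤ s → HasDerivWithinAt g (Q (g s)) (Set.Ici 0) s)
    (s : ℝ) (hs : 0 ≤ s) : g s = T s f := by
  have key := ODE_solution_unique (v := fun _ y => Q y) (K := Real.toNNReal (KQc Q))
    (f := g) (g := fun r => T r f) (a := 0) (b := s)
    (fun _ => Qlip hQ)
    (fun r hr => ((hg r hr.1).continuousWithinAt).mono (fun y hy => hy.1))
    (fun r hr => (hg r hr.1).mono (Set.Ici_subset_Ici.mpr hr.1))
    (TcontOn hT f le_rfl)
    (fun r hr => (hT.2 f r hr.1).mono (Set.Ici_subset_Ici.mpr hr.1))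
    (by show g 0 = T 0 f; rw [hg0, hT.1])
  exact key ⟨hs, le_rfl⟩

lemma Tconst (c : ℝ) (s : ℝ) (hs : 0 ≤ s) : T s (fun _ => c) = fun _ => c := by
  have := sol_unique hQ hT (f := fun _ => c) (g := fun _ => fun _ => c) rfl
    (fun r hr => by
      have h0 : Q (fun _ : X => c) = 0 := hQ.1 c
      rw [h0]
      exact hasDerivWithinAt_const r _ _) s hs
  exact this.symm

lemma Tsmul {l : ℝ} (hl : 0 ≤ l) (f : X → ℝ) (s : ℝ) (hs : 0 ≤ s) :
    T s (l • f) = l • T s f := by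
  have := sol_unique hQ hT (f := l • f) (g := fun r => l • T r f)
    (by show l • T 0 f = l • f; rw [hT.1]) (fun r hr => by
      rw [Qsmul hQ hl]
      exact (hT.2 f r hr).const_smul l) s hs
  exact this.symm

lemma Tconst_add (f : X → ℝ) (c : ℝ) (s : ℝ) (hs : 0 ≤ s) :
    T s (f + fun _ => c) = T s f + fun _ => c := by
  have := sol_unique hQ hT (f := f + fun _ => c) (g := fun r => T r f + fun _ => c)
    (by show T 0 f + (fun _ => c) = f + fun _ => c; rw [hT.1]) (fun r hr => by
      rw [Qconst_add hQ]
      exact (hT.2 f r hr).add_const _) s hs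
  exact this.symm

lemma Tadd (a b : ℝ) (ha : 0 ≤ a) (hb : 0 ≤ b) (f : X → ℝ) :
    T (a + b) f = T b (T a f) := by
  have := sol_unique hQ hT (f := T a f) (g := fun r => T (a + r) f)
    (by show T (a + 0) f = T a f; rw [add_zero]) (fun r hr => by
      have h1 : HasDerivWithinAt (fun ρ => T ρ f) (Q (T (a + r) f)) (Set.Ici 0) (a + r) :=
        hT.2 f _ (by positivity)
      have h2 : HasDerivWithinAt (fun ρ : ℝ => a + ρ) 1 (Set.Ici 0) r :=
        (hasDerivWithinAt_id r _).const_add a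
      have h3 := HasDerivWithinAt.scomp r h1 h2
        (fun y (hy : y ∈ Set.Ici (0:ℝ)) => by
          simp only [Set.mem_Ici] at hy ⊢
          positivity)
      simpa only [one_smul, Function.comp_def] using h3) b hb
  simpa using this

lemma Tmono {f g : X → ℝ} (h : f ≤ g) (s : ℝ) (hs : 0 ≤ s) : T s f ≤ T s g := by
  have key := sup'_le_gronwall (u := fun r x => T r f x - T r g x)
    (u' := fun r x => Q (T r f) x - Q (T r g) x)
    (A := Finset.univ) Finset.univ_nonempty (δ := 0) (K := 0) (ε := 0)
    (fun x _ r hr => ((Tderiv_coord hT f x r hr).sub (Tderiv_coord hT g x r hr)))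
    (fun x _ => by show T 0 f x - T 0 g x ≤ 0; rw [hT.1, hT.1]; simpa using h x)
    (fun r hr x _ hmax => by
      have h1 : Q (T r f) x - Q (T r g) x ≤ conjOp Q (T r f - T r g) x := Qsub_le hQ _ _ x
      have h2 : conjOp Q (T r f - T r g) x ≤ 0 := by
        apply conj_max_le hQ
        intro y
        have := hmax y (Finset.mem_univ y)
        simpa using this
      simp only [zero_mul, zero_add]
      linarith)
    s hs
  rw [gronwallBound_zero3] at key
  intro x
  have := le_trans (Finset.le_sup' (f := fun x => T s f x - T s g x) (Finset.mem_univ x)) key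
  linarith

lemma Tmin (f : X → ℝ) (s : ℝ) (hs : 0 ≤ s) (x : X) : minf f ≤ T s f x := by
  have h : (fun _ : X => minf f) ≤ f := fun y => minf_le f y
  have := Tmono hQ hT h s hs x
  rwa [Tconst hQ hT _ s hs] at this

lemma Tmax (f : X → ℝ) (s : ℝ) (hs : 0 ≤ s) (x : X) : T s f x ≤ maxf f := by
  have h : f ≤ (fun _ : X => maxf f) := fun y => le_maxf f y
  have := Tmono hQ hT h s hs x
  rwa [Tconst hQ hT _ s hs] at this

lemma Tsuper (f g : X → ℝ) (s : ℝ) (hs : 0 ≤ s) : T s f + T s g ≤ T s (f + g) := by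
  have key := sup'_le_gronwall (u := fun r x => T r f x + T r g x - T r (f + g) x)
    (u' := fun r x => Q (T r f) x + Q (T r g) x - Q (T r (f + g)) x)
    (A := Finset.univ) Finset.univ_nonempty (δ := 0) (K := 0) (ε := 0)
    (fun x _ r hr => (((Tderiv_coord hT f x r hr).add (Tderiv_coord hT g x r hr)).sub
      (Tderiv_coord hT (f + g) x r hr)))
    (fun x _ => by
      show T 0 f x + T 0 g x - T 0 (f + g) x ≤ 0
      rw [hT.1, hT.1, hT.1]; simp)
    (fun r hr x _ hmax => by
      set u : X → ℝ := fun y => T r f y + T r g y - T r (f + g) y with hu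
      have hrw : T r (f + g) = (T r f + T r g) + (-u) := by
        funext y
        simp only [hu, Pi.add_apply, Pi.neg_apply]
        ring
      have h1 : Q (T r f) + Q (T r g) + Q (-u) ≤ Q (T r (f + g)) := by
        rw [hrw]
        calc Q (T r f) + Q (T r g) + Q (-u) ≤ Q (T r f + T r g) + Q (-u) := by
              have := Qsuper hQ (T r f) (T r g)
              intro y; have := this y; simp only [Pi.add_apply] at *; linarith
        _ ≤ Q (T r f + T r g + -u) := Qsuper hQ _ _
      have h2 : conjOp Q u x ≤ 0 := by
        apply conj_max_le hQ
        intro y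
        have h4 : T r f y + T r g y - T r (f + g) y
            ≤ T r f x + T r g x - T r (f + g) x := hmax y (Finset.mem_univ y)
        simp only [hu]
        exact h4
      have h3 := h1 x
      simp only [Pi.add_apply, Pi.neg_apply, conjOp] at h2 h3 ⊢
      simp only [zero_mul, zero_add]
      linarith)
    s hs
  rw [gronwallBound_zero3] at key
  intro x
  have := le_trans (Finset.le_sup'
    (f := fun x => T s f x + T s g x - T s (f + g) x) (Finset.mem_univ x)) key
  simp only [Pi.add_apply]
  linarith

lemma Tnonexp (f g : X → ℝ) (s : ℝ) (hs : 0 ≤ s) : ‖T s f - T s g‖ ≤ ‖f - g‖ := by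
  have h1 : f ≤ g + fun _ => ‖f - g‖ := by
    intro x
    have := abs_apply_le_norm (f - g) x
    simp only [Pi.sub_apply] at this
    have := le_trans (le_abs_self _) this
    simp only [Pi.add_apply]
    linarith
  have h2 : g ≤ f + fun _ => ‖f - g‖ := by
    intro x
    have := abs_apply_le_norm (f - g) x
    simp only [Pi.sub_apply] at this
    have := le_trans (neg_le_abs _) this
    simp only [Pi.add_apply]
    linarith
  have k1 : T s f ≤ T s g + fun _ => ‖f - g‖ := by
    have := Tmono hQ hT h1 s hs
    rwa [Tconst_add hQ hT g _ s hs] at this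
  have k2 : T s g ≤ T s f + fun _ => ‖f - g‖ := by
    have := Tmono hQ hT h2 s hs
    rwa [Tconst_add hQ hT f _ s hs] at this
  apply pi_norm_le' (norm_nonneg _)
  intro x
  rw [abs_le]
  have := k1 x
  have := k2 x
  simp only [Pi.add_apply, Pi.sub_apply] at *
  constructor <;> linarith

lemma Tbdd (f : X → ℝ) (s : ℝ) (hs : 0 ≤ s) : ‖T s f‖ ≤ ‖f‖ := by
  apply pi_norm_le' (norm_nonneg _)
  intro x
  rw [abs_le]
  constructor
  · have h1 := Tmin hQ hT f s hs x
    obtain ⟨x₀, hx₀⟩ := exists_minf f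
    have := abs_apply_le_norm f x₀
    have := neg_abs_le (f x₀)
    rw [hx₀] at h1
    linarith
  · have h1 := Tmax hQ hT f s hs x
    obtain ⟨x₀, hx₀⟩ := exists_maxf f
    have := abs_apply_le_norm f x₀
    have := le_abs_self (f x₀)
    rw [hx₀] at h1
    linarith

lemma Tpers (h : X → ℝ) (hh : (0:X→ℝ) ≤ h) (x : X) (s : ℝ) (hs : 0 ≤ s) :
    h x * Real.exp (-(CQ Q) * s) ≤ T s h x := by
  have key := sup'_le_gronwall (u := fun r y => -(T r h y))
    (u' := fun r y => -(Q (T r h) y))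
    (A := {x}) (Finset.singleton_nonempty x) (δ := -(h x)) (K := -(CQ Q)) (ε := 0)
    (fun y _ r hr => (Tderiv_coord hT h y r hr).neg)
    (fun y hy => by
      rw [Finset.mem_singleton] at hy
      subst hy
      show -(T 0 h y) ≤ -(h y)
      rw [hT.1])
    (fun r hr y hy _ => by
      have hpos : (0:X→ℝ) ≤ T r h := by
        intro z
        show (0:ℝ) ≤ T r h z
        have h0 : (0:ℝ) ≤ minf h := le_minf (fun w => by simpa using hh w)
        have := Tmin hQ hT h r hr z
        linarith
      have hQn := Q_ge_neg hQ (T r h) hpos y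
      show -(Q (T r h) y) ≤ -(CQ Q) * (-(T r h y)) + 0
      nlinarith [hQn])
    s hs
  have hsup : ({x} : Finset X).sup' (Finset.singleton_nonempty x) (fun y => -(T s h y))
      = -(T s h x) := Finset.sup'_singleton _
  rw [hsup, gronwallBound_ε0] at key
  have : -(h x) * Real.exp (-(CQ Q) * s) = -(h x * Real.exp (-(CQ Q) * s)) := by ring
  rw [this] at key
  linarith

end Sol

section ConjT
variable {X : Type*} [Fintype X] [Nonempty X] {Q : (X → ℝ) → (X → ℝ)}
  {T : ℝ → (X → ℝ) → (X → ℝ)} (hQ : IsLTRO Q) (hT : IsSol Q T)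

include hQ hT

lemma Tzero (s : ℝ) (hs : 0 ≤ s) : T s 0 = 0 := by
  have := Tconst hQ hT 0 s hs
  exact this

lemma cT_mono {f g : X → ℝ} (h : f ≤ g) (s : ℝ) (hs : 0 ≤ s) :
    conjOp (T s) f ≤ conjOp (T s) g := by
  intro x
  have hneg : -g ≤ -f := fun y => by simp [h y]
  have := Tmono hQ hT hneg s hs x
  simp only [conjOp, Pi.neg_apply]
  linarith

lemma cT_ge_T (f : X → ℝ) (s : ℝ) (hs : 0 ≤ s) : T s f ≤ conjOp (T s) f := by
  intro x
  have h1 := Tsuper hQ hT f (-f) s hs x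
  rw [show f + -f = 0 from by funext y; simp] at h1
  rw [Tzero hQ hT s hs] at h1
  simp only [Pi.add_apply, Pi.zero_apply] at h1
  simp only [conjOp, Pi.neg_apply]
  linarith

lemma cT_const_add (f : X → ℝ) (c : ℝ) (s : ℝ) (hs : 0 ≤ s) :
    conjOp (T s) (f + fun _ => c) = conjOp (T s) f + fun _ => c := by
  simp only [conjOp]
  rw [show -(f + fun _ => c) = -f + fun _ => -c from by funext y; simp; ring,
    Tconst_add hQ hT (-f) (-c) s hs]
  funext y; simp only [Pi.add_apply, Pi.neg_apply]; ring

lemma cT_smul {l : ℝ} (hl : 0 ≤ l) (f : X → ℝ) (s : ℝ) (hs : 0 ≤ s) :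
    conjOp (T s) (l • f) = l • conjOp (T s) f := by
  simp only [conjOp]
  rw [show -(l • f) = l • (-f) from by funext y; simp, Tsmul hQ hT hl (-f) s hs]
  funext y; simp

lemma cT_subadd (f g : X → ℝ) (s : ℝ) (hs : 0 ≤ s) :
    conjOp (T s) (f + g) ≤ conjOp (T s) f + conjOp (T s) g := by
  intro x
  have h := Tsuper hQ hT (-f) (-g) s hs x
  rw [show -f + -g = -(f + g) from by funext y; simp; ring] at h
  simp only [Pi.add_apply, conjOp, Pi.neg_apply] at h ⊢
  linarith

lemma cT_sum_le {ι : Type*} (A : Finset ι) (g : ι → X → ℝ) (s : ℝ) (hs : 0 ≤ s) :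
    conjOp (T s) (∑ i ∈ A, g i) ≤ ∑ i ∈ A, conjOp (T s) (g i) := by
  induction A using Finset.cons_induction with
  | empty =>
    simp only [Finset.sum_empty]
    intro x
    simp [conjOp, Tzero hQ hT s hs]
  | cons a A' ha ih =>
    rw [Finset.sum_cons, Finset.sum_cons]
    intro x
    have h1 := cT_subadd hQ hT (g a) (∑ i ∈ A', g i) s hs x
    have h2 := ih x
    simp only [Pi.add_apply] at h1 h2 ⊢
    linarith

lemma cT_const (c : ℝ) (s : ℝ) (hs : 0 ≤ s) :
    conjOp (T s) (fun _ => c) = fun _ => c := by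
  simp only [conjOp]
  rw [show -(fun _ : X => c) = (fun _ : X => -c) from by funext y; simp,
    Tconst hQ hT (-c) s hs]
  funext y; simp

lemma cT_add (a b : ℝ) (ha : 0 ≤ a) (hb : 0 ≤ b) (f : X → ℝ) :
    conjOp (T (a + b)) f = conjOp (T b) (conjOp (T a) f) := by
  simp only [conjOp]
  rw [Tadd hQ hT a b ha hb (-f)]
  congr 1
  congr 1
  funext y; simp

lemma cT_nonneg {h : X → ℝ} (hh : (0:X→ℝ) ≤ h) (s : ℝ) (hs : 0 ≤ s) :
    (0:X→ℝ) ≤ conjOp (T s) h := by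
  intro x
  have h1 := Tmin hQ hT h s hs x
  have h2 : (0:ℝ) ≤ minf h := le_minf (fun w => by simpa using hh w)
  have h3 := cT_ge_T hQ hT h s hs x
  show (0:ℝ) ≤ _
  linarith

lemma cT_le_max (h : X → ℝ) (s : ℝ) (hs : 0 ≤ s) (x : X) :
    conjOp (T s) h x ≤ maxf h := by
  have h1 := Tmin hQ hT (-h) s hs x
  rw [minf_neg] at h1
  simp only [conjOp, Pi.neg_apply]
  linarith

lemma T_compl (A : Set X) (s : ℝ) (hs : 0 ≤ s) (x : X) :
    T s (ind A) x = 1 - conjOp (T s) (ind Aᶜ) x := by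
  have hdec : ind A = -(ind Aᶜ) + fun _ => 1 := by
    funext v
    by_cases hv : v ∈ A
    · rw [ind_of_mem hv, Pi.add_apply, Pi.neg_apply,
        ind_of_not_mem (by simp [hv] : v ∉ Aᶜ)]
      simp
    · rw [ind_of_not_mem hv, Pi.add_apply, Pi.neg_apply,
        ind_of_mem (by simp [hv] : v ∈ Aᶜ)]
      simp
  rw [hdec, Tconst_add hQ hT (-(ind Aᶜ)) 1 s hs]
  simp only [Pi.add_apply, conjOp, Pi.neg_apply]
  ring

lemma cT_pers (h : X → ℝ) (hh : (0:X→ℝ) ≤ h) (x : X) (s : ℝ) (hs : 0 ≤ s) :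
    h x * Real.exp (-(CQ Q) * s) ≤ conjOp (T s) h x :=
  le_trans (Tpers hQ hT h hh x s hs) (cT_ge_T hQ hT h s hs x)

omit hQ hT in
lemma ignite_scalar {φ : ℝ → ℝ} {q : ℝ} (h0 : φ 0 = 0)
    (hd : HasDerivWithinAt φ q (Set.Ici 0) 0) (hq : 0 < q) :
    ∃ r₀ > 0, ∀ r, 0 < r → r < r₀ → 0 < φ r := by
  rw [hasDerivWithinAt_iff_tendsto_slope, Set.Ici_sdiff_left] at hd
  have hev : {z : ℝ | 0 < slope φ 0 z} ∈ 𝓝[>] (0:ℝ) := hd (Ioi_mem_nhds hq)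
  obtain ⟨r₀, hr₀mem, hIoo⟩ := (mem_nhdsGT_iff_exists_Ioo_subset).mp hev
  refine ⟨r₀, hr₀mem, fun r hr hrr₀ => ?_⟩
  have hslope : 0 < slope φ 0 r := hIoo ⟨hr, hrr₀⟩
  rw [slope_def_field, h0, sub_zero, sub_zero] at hslope
  have := mul_pos hslope hr
  rwa [div_mul_cancel₀ _ (ne_of_gt hr)] at this

lemma T_ignite {g : X → ℝ} {x : X} (h0 : g x = 0) (hq : 0 < Q g x) :
    ∃ r₀ > 0, ∀ r, 0 < r → r < r₀ → 0 < T r g x := by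
  apply ignite_scalar (φ := fun r => T r g x)
  · rw [hT.1, h0]
  · have := Tderiv_coord hT g x 0 le_rfl
    rwa [hT.1] at this
  · exact hq

lemma cT_ignite {g : X → ℝ} {x : X} (h0 : g x = 0) (hq : 0 < conjOp Q g x) :
    ∃ r₀ > 0, ∀ r, 0 < r → r < r₀ → 0 < conjOp (T r) g x := by
  have key := ignite_scalar (φ := fun r => -(T r (-g) x)) (q := conjOp Q g x)
    (by show -(T 0 (-g) x) = 0; rw [hT.1]; simp [h0]) ?_ hq
  · obtain ⟨r₀, hr₀, hpos⟩ := key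
    exact ⟨r₀, hr₀, fun r hr hrr₀ => hpos r hr hrr₀⟩
  · have := (Tderiv_coord hT (-g) x 0 le_rfl).neg
    rw [hT.1] at this
    exact this

lemma cT_persist_pos {w : X → ℝ} (hw : (0:X→ℝ) ≤ w) {y : X} (hpos : 0 < w y)
    (b : ℝ) (hb : 0 ≤ b) : 0 < conjOp (T b) w y := by
  have h1 := cT_pers hQ hT w hw y b hb
  have h2 : 0 < w y * Real.exp (-(CQ Q) * b) := mul_pos hpos (Real.exp_pos _)
  linarith

lemma T_persist_pos {w : X → ℝ} (hw : (0:X→ℝ) ≤ w) {y : X} (hpos : 0 < w y)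
    (b : ℝ) (hb : 0 ≤ b) : 0 < T b w y := by
  have h1 := Tpers hQ hT w hw y b hb
  have h2 : 0 < w y * Real.exp (-(CQ Q) * b) := mul_pos hpos (Real.exp_pos _)
  linarith

lemma cT_selfpos (x : X) (s : ℝ) (hs : 0 ≤ s) : 0 < conjOp (T s) (ind {x}) x :=
  cT_persist_pos hQ hT (ind_nonneg _) (by rw [ind_of_mem (Set.mem_singleton x)]; norm_num) s hs

lemma cT_step {x y : X} (hxy : x ≠ y) (hrate : 0 < conjOp Q (ind {x}) y) :
    ∀ s, 0 < s → 0 < conjOp (T s) (ind {x}) y := by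
  have h0 : ind ({x} : Set X) y = 0 := ind_of_not_mem (by simp [Ne.symm hxy])
  obtain ⟨r₀, hr₀, hign⟩ := cT_ignite hQ hT h0 hrate
  intro s hs
  rcases lt_or_ge s r₀ with hcase | hcase
  · exact hign s hs hcase
  · set r := r₀ / 2 with hr
    have hrpos : 0 < r := by positivity
    have hrlt : r < r₀ := by rw [hr]; linarith
    have hsr : 0 ≤ s - r := by linarith
    have hsplit : s = r + (s - r) := by ring
    rw [hsplit, cT_add hQ hT r (s - r) (le_of_lt hrpos) hsr]
    apply cT_persist_pos hQ hT
      (cT_nonneg hQ hT (ind_nonneg _) r (le_of_lt hrpos))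
      (hign r hrpos hrlt) _ hsr

omit hQ hT in
lemma upperReach_refl (y : X) : upperReach Q y y :=
  ⟨0, fun _ => y, rfl, rfl, fun k hk => absurd hk (Nat.not_lt_zero k)⟩

lemma cT_of_upperReach {y x : X} (h : upperReach Q y x) :
    ∀ s, 0 < s → 0 < conjOp (T s) (ind {x}) y := by
  obtain ⟨n, p, hp0, hpn, hstep⟩ := h
  subst hp0
  induction n generalizing p with
  | zero =>
    subst hpn
    exact fun s hs => cT_selfpos hQ hT _ s (le_of_lt hs)
  | succ n ih =>
    intro s hs
    have hhalf : 0 < s / 2 := by linarith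
    have hIH : 0 < conjOp (T (s / 2)) (ind {x}) (p 1) := by
      apply ih (fun k => p (k + 1)) hpn
        (fun k hk => hstep (k + 1) (by omega)) _ hhalf
    set w := conjOp (T (s / 2)) (ind {x}) with hw
    have hwnn : (0:X→ℝ) ≤ w := cT_nonneg hQ hT (ind_nonneg _) _ (le_of_lt hhalf)
    have hle : (w (p 1)) • ind {p 1} ≤ w := by
      intro v
      by_cases hv : v ∈ ({p 1} : Set X)
      · rw [Set.mem_singleton_iff] at hv
        subst hv
        rw [Pi.smul_apply, ind_of_mem (Set.mem_singleton _), smul_eq_mul, mul_one]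
      · rw [Pi.smul_apply, ind_of_not_mem hv, smul_eq_mul, mul_zero]
        exact hwnn v
    have hsplit : s = s / 2 + s / 2 := by ring
    rw [hsplit, cT_add hQ hT (s/2) (s/2) (le_of_lt hhalf) (le_of_lt hhalf), ← hw]
    calc (0:ℝ) < w (p 1) * conjOp (T (s/2)) (ind {p 1}) (p 0) := by
          apply mul_pos hIH
          exact cT_step hQ hT (hstep 0 (by omega)).1 (hstep 0 (by omega)).2 _ hhalf
    _ = (w (p 1) • conjOp (T (s/2)) (ind {p 1})) (p 0) := by simp
    _ = (conjOp (T (s/2)) ((w (p 1)) • ind {p 1})) (p 0) := by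
          rw [cT_smul hQ hT (hwnn (p 1)) _ _ (le_of_lt hhalf)]
    _ ≤ conjOp (T (s/2)) w (p 0) := cT_mono hQ hT hle _ (le_of_lt hhalf) (p 0)

omit hQ hT in
lemma upperReach_snoc {y z w : X} (h : upperReach Q y z) (hne : w ≠ z)
    (hrate : 0 < conjOp Q (ind {w}) z) : upperReach Q y w := by
  obtain ⟨n, p, hp0, hpn, hstep⟩ := h
  refine ⟨n + 1, fun k => if k ≤ n then p k else w, by simpa using hp0, by simp, ?_⟩
  intro k hk
  rcases Nat.lt_or_ge k n with hkn | hkn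
  · have h1 : k + 1 ≤ n := hkn
    have h2 : k ≤ n := le_of_lt hkn
    simpa [h1, h2] using hstep k hkn
  · have hkeq : k = n := by omega
    subst hkeq
    have h1 : ¬(k + 1 ≤ k) := by omega
    simp only [h1, if_false, le_refl, if_true, hpn]
    exact ⟨hne, hrate⟩

lemma cT_closure_zero (y : X) {z : X} (hz : upperReach Q y z) (s : ℝ) (hs : 0 ≤ s) :
    conjOp (T s) (ind {w | upperReach Q y w}ᶜ) z = 0 := by
  set R : Set X := {w | upperReach Q y w} with hR
  set AR : Finset X := Finset.univ.filter (· ∈ R) with hAR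
  have hARne : AR.Nonempty := ⟨y, by simp [hAR, hR]; exact upperReach_refl y⟩
  have key := sup'_le_gronwall (u := fun r v => -(T r (-(ind Rᶜ)) v))
    (u' := fun r v => -(Q (T r (-(ind Rᶜ))) v))
    hARne (δ := 0) (K := 0) (ε := 0)
    (fun v _ r hr => (Tderiv_coord hT (-(ind Rᶜ)) v r hr).neg)
    (fun v hv => by
      show -(T 0 (-(ind Rᶜ)) v) ≤ 0
      rw [hT.1]
      have hvR : v ∈ R := by simpa [hAR] using hv
      simp only [Pi.neg_apply, neg_neg]
      rw [ind_of_not_mem (by simp [hvR] : v ∉ Rᶜ)])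
    (fun r hr v hv hmax => by
      show -(Q (T r (-(ind Rᶜ))) v) ≤ 0 * (-(T r (-(ind Rᶜ)) v)) + 0
      have hvR : v ∈ R := by simpa [hAR] using hv
      -- u r = conjOp (T r) (ind Rᶜ)
      set u : X → ℝ := conjOp (T r) (ind Rᶜ) with hu
      have hueq : ∀ v', -(T r (-(ind Rᶜ)) v') = u v' := fun v' => rfl
      set M : ℝ := u v with hM
      have hune : (0:X→ℝ) ≤ u := cT_nonneg hQ hT (ind_nonneg _) r hr
      have hule : ∀ v', u v' ≤ 1 := fun v' => by
        have := cT_le_max hQ hT (ind Rᶜ) r hr v'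
        have hm : maxf (ind Rᶜ) ≤ 1 := maxf_le (fun w => by
          have := ind_le_one Rᶜ w; simpa using this)
        rw [hu]; exact le_trans this hm
      have hM1 : M ≤ 1 := hule v
      -- derivative identity
      have hder : -(Q (T r (-(ind Rᶜ))) v) = conjOp Q u v := by
        simp only [conjOp, Pi.neg_apply]
        congr 2
        funext v'
        simp [hu, conjOp]
      rw [hder]
      -- decomposition
      set vfun : X → ℝ := ((1 - M) • ind Rᶜ) + fun _ => M with hvfun
      have hules : u ≤ vfun := by
        intro v'
        by_cases hv' : v' ∈ R
        · have : u v' ≤ M := by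
            have := hmax v' (by simp [hAR, hv'])
            simpa [hueq] using this
          rw [hvfun, Pi.add_apply, Pi.smul_apply,
            ind_of_not_mem (by simp [hv'] : v' ∉ Rᶜ)]
          simpa using this
        · rw [hvfun, Pi.add_apply, Pi.smul_apply, ind_of_mem (by simp [hv'] : v' ∈ Rᶜ)]
          have := hule v'
          simp only [smul_eq_mul, mul_one]
          linarith
      have hveq : vfun v = M := by
        rw [hvfun, Pi.add_apply, Pi.smul_apply,
          ind_of_not_mem (by simp [hvR] : v ∉ Rᶜ)]
        simp
      have hsub : conjOp Q u v ≤ conjOp Q vfun v + conjOp Q (u - vfun) v := by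
        have := conj_subadd hQ vfun (u - vfun) v
        rw [show vfun + (u - vfun) = u from by funext v'; simp] at this
        simpa using this
      have hneg : conjOp Q (u - vfun) v ≤ 0 := by
        apply conj_neg_max hQ
        · intro v'; have := hules v'; simp only [Pi.sub_apply, Pi.zero_apply]; linarith
        · simp only [Pi.sub_apply, hveq]; rw [← hM]; ring
      have hvval : conjOp Q vfun v ≤ 0 := by
        rw [hvfun, conj_const_add hQ, conj_smul hQ (by linarith : (0:ℝ) ≤ 1 - M)]
        have hcompl : conjOp Q (ind Rᶜ) v ≤ 0 := by
          apply conj_ind_nonpos hQ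
          intro w hwRc
          by_contra hcon
          push_neg at hcon
          have hwv : w ≠ v := by
            intro he; subst he; exact hwRc hvR
          exact hwRc (upperReach_snoc hvR hwv hcon)
        have h1M : (0:ℝ) ≤ 1 - M := by linarith
        simp only [Pi.smul_apply, smul_eq_mul]
        exact mul_nonpos_of_nonneg_of_nonpos h1M hcompl
      simp only [zero_mul, zero_add]
      linarith)
    s hs
  rw [gronwallBound_zero3] at key
  have hzle := le_trans (Finset.le_sup' (f := fun v => -(T s (-(ind Rᶜ)) v))
    (by simp [hAR]; exact hz : z ∈ AR)) key
  have hge : 0 ≤ conjOp (T s) (ind Rᶜ) z := cT_nonneg hQ hT (ind_nonneg _) s hs z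
  have heq : conjOp (T s) (ind Rᶜ) z = -(T s (-(ind Rᶜ)) z) := rfl
  rw [heq]
  linarith

lemma upperReach_of_cT_pos {y x : X} {s : ℝ} (hs : 0 ≤ s)
    (hpos : 0 < conjOp (T s) (ind {x}) y) : upperReach Q y x := by
  by_contra hcon
  have hsub : ind ({x} : Set X) ≤ ind ({w | upperReach Q y w}ᶜ) :=
    ind_mono (by intro v hv; rw [Set.mem_singleton_iff] at hv; subst hv; exact hcon)
  have h1 := cT_mono hQ hT hsub s hs y
  rw [cT_closure_zero hQ hT y (upperReach_refl y) s hs] at h1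
  linarith

omit hQ hT in
lemma upperReach_trans {a b c : X} (h1 : upperReach Q a b) (h2 : upperReach Q b c) :
    upperReach Q a c := by
  obtain ⟨n, p, hp0, hpn, hpstep⟩ := h1
  obtain ⟨m, q, hq0, hqm, hqstep⟩ := h2
  refine ⟨n + m, fun k => if k ≤ n then p k else q (k - n), by simpa using hp0, ?_, ?_⟩
  · rcases Nat.eq_zero_or_pos m with hm | hm
    · subst hm
      simp only [add_zero, le_refl, if_true, hpn]
      rw [← hq0, ← hqm]
    · have : ¬(n + m ≤ n) := by omega
      simp only [this, if_false]
      rw [show n + m - n = m from by omega, hqm]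
  · intro k hk
    rcases Nat.lt_or_ge k n with hkn | hkn
    · have h1' : k + 1 ≤ n := hkn
      have h2' : k ≤ n := le_of_lt hkn
      simpa [h1', h2'] using hpstep k hkn
    · have hq' : ∀ j, j ≥ n → (if j ≤ n then p j else q (j - n)) = q (j - n) := by
        intro j hj
        rcases Nat.eq_or_lt_of_le hj with he | hl
        · subst he; simp [hpn, ← hq0]
        · have : ¬(j ≤ n) := by omega
          simp [this]
      have hk1 : k + 1 ≥ n := by omega
      beta_reduce
      rw [hq' (k + 1) hk1, hq' k hkn]
      rw [show k + 1 - n = (k - n) + 1 from by omega]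
      exact hqstep (k - n) (by omega)

end ConjT

section Lower
variable {X : Type*} [Fintype X] [Nonempty X] {Q : (X → ℝ) → (X → ℝ)}
  {T : ℝ → (X → ℝ) → (X → ℝ)} (hQ : IsLTRO Q) (hT : IsSol Q T)

lemma lowerStep_subset (A : Set X) : A ⊆ lowerStep Q A := Set.subset_union_left

lemma iterate_lowerStep_subset (A : Set X) (k : ℕ) : A ⊆ (lowerStep Q)^[k] A := by
  induction k with
  | zero => simp
  | succ k ih =>
    rw [Function.iterate_succ_apply']
    exact subset_trans ih (lowerStep_subset _)

include hQ in
lemma lowerStep_stable_nonpos {L : Set X} (hst : lowerStep Q L = L) {y : X} (hy : y ∉ L) :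
    Q (ind L) y ≤ 0 := by
  by_contra h
  push_neg at h
  have : y ∈ lowerStep Q L := Or.inr ⟨hy, h⟩
  rw [hst] at this
  exact hy this

include hQ in
lemma lowerStep_empty_pos {B : Set X} {z : X} (hq : 0 < Q (ind B) z) : B.Nonempty := by
  rcases Set.eq_empty_or_nonempty B with hB | hB
  · exfalso
    have : ind B = 0 := by
      funext v; rw [ind_of_not_mem (by rw [hB]; exact Set.notMem_empty v)]; rfl
    rw [this, Qzero hQ] at hq
    exact lt_irrefl 0 hq
  · exact hB

lemma exists_stable (A : Set X) :
    ∃ n : ℕ, lowerStep Q ((lowerStep Q)^[n] A) = (lowerStep Q)^[n] A := by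
  by_contra h
  push_neg at h
  have grow : ∀ n : ℕ, n ≤ ((lowerStep Q)^[n] A).ncard := by
    intro n
    induction n with
    | zero => exact Nat.zero_le _
    | succ n ih =>
      have hsub : (lowerStep Q)^[n] A ⊂ (lowerStep Q)^[n + 1] A := by
        rw [Function.iterate_succ_apply']
        exact ssubset_of_subset_of_ne (lowerStep_subset _) (Ne.symm (h n))
      have := Set.ncard_lt_ncard hsub (Set.toFinite _)
      omega
  have h1 := grow (Fintype.card X + 1)
  have h2 : ((lowerStep Q)^[Fintype.card X + 1] A).ncard ≤ Fintype.card X := by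
    have := Set.ncard_le_ncard (Set.subset_univ ((lowerStep Q)^[Fintype.card X + 1] A))
      (Set.toFinite _)
    rwa [Set.ncard_univ, Nat.card_eq_fintype_card] at this
  omega

include hQ hT in
lemma lower_invariant {L : Set X} (hst : lowerStep Q L = L) {z : X} (hz : z ∉ L)
    (s : ℝ) (hs : 0 ≤ s) : T s (ind L) z = 0 := by
  set AL : Finset X := Finset.univ.filter (· ∉ L) with hAL
  have hALne : AL.Nonempty := ⟨z, by simp [hAL, hz]⟩
  have key := sup'_le_gronwall (u := fun r v => T r (ind L) v)
    (u' := fun r v => Q (T r (ind L)) v)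
    hALne (δ := 0) (K := 0) (ε := 0)
    (fun v _ r hr => Tderiv_coord hT (ind L) v r hr)
    (fun v hv => by
      show T 0 (ind L) v ≤ 0
      rw [hT.1]
      have hvL : v ∉ L := by simpa [hAL] using hv
      rw [ind_of_not_mem hvL])
    (fun r hr v hv hmax => by
      show Q (T r (ind L)) v ≤ 0 * (T r (ind L) v) + 0
      have hvL : v ∉ L := by simpa [hAL] using hv
      set u : X → ℝ := T r (ind L) with hu
      set M : ℝ := u v with hM
      have hule : ∀ v', u v' ≤ 1 := fun v' => by
        have h1 := Tmax hQ hT (ind L) r hr v'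
        have h2 : maxf (ind L) ≤ 1 := maxf_le (fun w => by
          have := ind_le_one L w; simpa using this)
        rw [hu]; exact le_trans h1 h2
      have hM1 : M ≤ 1 := hule v
      set vfun : X → ℝ := ((1 - M) • ind L) + fun _ => M with hvfun
      have hules : u ≤ vfun := by
        intro v'
        by_cases hv' : v' ∈ L
        · rw [hvfun, Pi.add_apply, Pi.smul_apply, ind_of_mem hv']
          have := hule v'
          simp only [smul_eq_mul, mul_one]
          linarith
        · have : u v' ≤ M := hmax v' (by simp [hAL, hv'])
          rw [hvfun, Pi.add_apply, Pi.smul_apply, ind_of_not_mem hv']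
          simpa using this
      have hveq : vfun v = M := by
        rw [hvfun, Pi.add_apply, Pi.smul_apply, ind_of_not_mem hvL]
        simp
      have hsub : Q u v ≤ Q vfun v + conjOp Q (u - vfun) v := by
        have := Qsub_le hQ u vfun v
        simp only [Pi.sub_apply] at this ⊢
        linarith
      have hneg : conjOp Q (u - vfun) v ≤ 0 := by
        apply conj_neg_max hQ
        · intro v'; have := hules v'; simp only [Pi.sub_apply, Pi.zero_apply]; linarith
        · simp only [Pi.sub_apply, hveq]; rw [← hM]; ring
      have hvval : Q vfun v ≤ 0 := by
        rw [hvfun, Qconst_add hQ, Qsmul hQ (by linarith : (0:ℝ) ≤ 1 - M)]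
        have hLn := lowerStep_stable_nonpos hQ hst hvL
        have h1M : (0:ℝ) ≤ 1 - M := by linarith
        simp only [Pi.smul_apply, smul_eq_mul]
        exact mul_nonpos_of_nonneg_of_nonpos h1M hLn
      simp only [zero_mul, zero_add]
      linarith)
    s hs
  rw [gronwallBound_zero3] at key
  have hzle := le_trans (Finset.le_sup' (f := fun v => T s (ind L) v)
    (by simp [hAL, hz] : z ∈ AL)) key
  have hge : 0 ≤ T s (ind L) z := by
    have h1 := Tmin hQ hT (ind L) s hs z
    have h2 : (0:ℝ) ≤ minf (ind L) := le_minf (fun w => by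
      have := ind_nonneg L w; simpa using this)
    linarith
  linarith

include hQ hT in
lemma lowerStep_pos (A₀ : Set X) :
    ∀ k : ℕ, ∀ z ∈ (lowerStep Q)^[k] A₀, ∀ s, 0 < s → 0 < T s (ind A₀) z := by
  intro k
  induction k with
  | zero =>
    intro z hz s hs
    simp only [Function.iterate_zero, id_eq] at hz
    exact T_persist_pos hQ hT (ind_nonneg _) (by rw [ind_of_mem hz]; norm_num) s (le_of_lt hs)
  | succ k ih =>
    intro z hz s hs
    rw [Function.iterate_succ_apply'] at hz
    rcases hz with hzB | ⟨hznB, hq⟩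
    · exact ih z hzB s hs
    · set B := (lowerStep Q)^[k] A₀ with hB
      obtain ⟨r₀, hr₀, hign⟩ := T_ignite hQ hT (ind_of_not_mem hznB) hq
      set r := min (r₀/2) (s/2) with hr
      have hrpos : 0 < r := by rw [hr]; positivity
      have hrlt : r < r₀ := lt_of_le_of_lt (min_le_left _ _) (by linarith)
      have hrs : r ≤ s / 2 := min_le_right _ _
      have hsr : 0 < s - r := by linarith
      have hBF : (Finset.univ.filter (· ∈ B)).Nonempty := by
        obtain ⟨b, hb⟩ := lowerStep_empty_pos hQ hq
        exact ⟨b, by simp [hb]⟩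
      set w := T (s - r) (ind A₀) with hw
      set ε' := (Finset.univ.filter (· ∈ B)).inf' hBF w with hε'
      have hε'pos : 0 < ε' := by
        rw [hε', Finset.lt_inf'_iff]
        intro b hb
        exact ih b (by simpa using hb) (s - r) hsr
      have hwnn : (0:X→ℝ) ≤ w := by
        intro v
        show (0:ℝ) ≤ w v
        have := Tmin hQ hT (ind A₀) (s - r) (le_of_lt hsr) v
        have h2 : (0:ℝ) ≤ minf (ind A₀) := le_minf (fun v' => by
          have := ind_nonneg A₀ v'; simpa using this)
        rw [hw]; linarith
      have hle : ε' • ind B ≤ w := by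
        intro v
        by_cases hv : v ∈ B
        · rw [Pi.smul_apply, ind_of_mem hv, smul_eq_mul, mul_one]
          exact Finset.inf'_le _ (by simp [hv])
        · rw [Pi.smul_apply, ind_of_not_mem hv, smul_eq_mul, mul_zero]
          exact hwnn v
      have hsplit : s = (s - r) + r := by ring
      rw [hsplit, Tadd hQ hT (s - r) r (le_of_lt hsr) (le_of_lt hrpos), ← hw]
      calc (0:ℝ) < ε' * T r (ind B) z := mul_pos hε'pos (hign r hrpos hrlt)
      _ = T r (ε' • ind B) z := by
          rw [Tsmul hQ hT (le_of_lt hε'pos) (ind B) r (le_of_lt hrpos)]; simp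
      _ ≤ T r w z := Tmono hQ hT hle r (le_of_lt hrpos) z

end Lower

section Main
variable {X : Type*} [Fintype X] [Nonempty X] {Q : (X → ℝ) → (X → ℝ)}
  {T : ℝ → (X → ℝ) → (X → ℝ)} (hQ : IsLTRO Q) (hT : IsSol Q T)

include hQ hT

lemma mem_X1A_of {x : X} {s : ℝ} (hs : 0 < s) (h : ∀ y, upperReach Q y x) :
    x ∈ X1A (T s) := by
  show 0 < minf (conjOp (T s) (ind {x}))
  obtain ⟨y₀, hy₀⟩ := exists_minf (conjOp (T s) (ind {x}))
  rw [hy₀]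
  exact cT_of_upperReach hQ hT (h y₀) s hs

lemma upperReach_of_mem_X1A {x : X} {s : ℝ} (hs : 0 ≤ s) (h : x ∈ X1A (T s)) :
    ∀ y, upperReach Q y x := by
  intro y
  have h1 : 0 < conjOp (T s) (ind {x}) y := lt_of_lt_of_le h (minf_le _ y)
  exact upperReach_of_cT_pos hQ hT hs h1

lemma necessity (herg : ErgodicQ T) {t : ℝ} (ht : 0 < t) : OneStepAbs (T t) := by
  classical
  -- limits of upper probabilities of singletons
  have hlim : ∀ x : X, ∃ cb : ℝ,
      Tendsto (fun s => conjOp (T s) (ind {x})) atTop (𝓝 (fun _ => cb)) := by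
    intro x
    obtain ⟨c, hc⟩ := herg (-(ind {x}))
    refine ⟨-c, ?_⟩
    have h2 : (fun _ : X => -c) = -(fun _ : X => c) := by funext y; simp
    rw [h2]
    exact hc.neg
  choose cb hcb using hlim
  -- the sum of the limits is at least 1
  obtain ⟨y⟩ := (inferInstance : Nonempty X)
  have hsum1 : ∀ s, 0 ≤ s → 1 ≤ ∑ x : X, conjOp (T s) (ind {x}) y := by
    intro s hs
    have h1 := cT_sum_le hQ hT Finset.univ (fun x : X => ind {x}) s hs y
    rw [sum_ind_single, cT_const hQ hT 1 s hs] at h1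
    rw [Finset.sum_apply] at h1
    exact h1
  have hsumtend : Tendsto (fun s => ∑ x : X, conjOp (T s) (ind {x}) y) atTop
      (𝓝 (∑ x : X, cb x)) := by
    apply tendsto_finset_sum
    intro x _
    have := (tendsto_pi_nhds.mp (hcb x)) y
    exact this
  have hsumge : 1 ≤ ∑ x : X, cb x :=
    ge_of_tendsto hsumtend ((eventually_ge_atTop 0).mono (fun s hs => hsum1 s hs))
  -- pigeonhole
  have hcard : 0 < (Fintype.card X : ℝ) := by
    have := Fintype.card_pos_iff.mpr (inferInstance : Nonempty X)
    exact_mod_cast this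
  have hex : ∃ x₀ : X, 0 < cb x₀ := by
    by_contra hcon
    push_neg at hcon
    have : ∑ x : X, cb x ≤ 0 := Finset.sum_nonpos (fun x _ => hcon x)
    linarith
  obtain ⟨x₀, hx₀⟩ := hex
  -- find a positive time with everywhere-positive upper probability
  have hev1 : ∀ᶠ s in atTop, ∀ y' : X, 0 < conjOp (T s) (ind {x₀}) y' := by
    have hd := Metric.tendsto_nhds.mp (hcb x₀) (cb x₀) hx₀
    filter_upwards [hd] with s hs y'
    have := dist_le_pi_dist (conjOp (T s) (ind {x₀})) (fun _ => cb x₀) y'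
    have h2 : dist (conjOp (T s) (ind {x₀}) y') (cb x₀) < cb x₀ := lt_of_le_of_lt this hs
    rw [Real.dist_eq, abs_lt] at h2
    linarith [h2.1]
  obtain ⟨s₀, hs₀pos, hs₀⟩ : ∃ s₀, 0 < s₀ ∧ ∀ y' : X, 0 < conjOp (T s₀) (ind {x₀}) y' := by
    obtain ⟨s₀, h1, h2⟩ := ((eventually_gt_atTop 0).and hev1).exists
    exact ⟨s₀, h1, h2⟩
  have hreach : ∀ y', upperReach Q y' x₀ := fun y' =>
    upperReach_of_cT_pos hQ hT (le_of_lt hs₀pos) (hs₀ y')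
  set A : Set X := X1A (T t) with hA
  have hx₀A : x₀ ∈ A := mem_X1A_of hQ hT ht hreach
  -- the orbit of x₀ keeps full lower probability on A
  set U : Set X := {u | upperReach Q x₀ u} with hU
  have hUA : U ⊆ A := by
    intro u hu
    apply mem_X1A_of hQ hT ht
    intro y'
    exact upperReach_trans (hreach y') hu
  have hTA1 : ∀ s, 0 ≤ s → T s (ind A) x₀ = 1 := by
    intro s hs
    have hz := cT_closure_zero hQ hT x₀ (upperReach_refl x₀) s hs
    have hTU : T s (ind U) x₀ = 1 := by
      rw [T_compl hQ hT U s hs x₀]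
      rw [show ({w | upperReach Q x₀ w} : Set X) = U from rfl] at hz
      rw [hz]; ring
    have hle : T s (ind U) x₀ ≤ T s (ind A) x₀ := Tmono hQ hT (ind_mono hUA) s hs x₀
    have hub : T s (ind A) x₀ ≤ 1 := by
      have h1 := Tmax hQ hT (ind A) s hs x₀
      have h2 : maxf (ind A) ≤ 1 := maxf_le (fun w => by
        have := ind_le_one A w; simpa using this)
      linarith
    linarith
  -- ergodicity forces the limit of T s (ind A) to be the constant 1
  obtain ⟨c, hc⟩ := herg (ind A)
  have hcoord : Tendsto (fun s => T s (ind A) x₀) atTop (𝓝 c) :=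
    tendsto_pi_nhds.mp hc x₀
  have hc1 : c = 1 := by
    have h1 : Tendsto (fun s => T s (ind A) x₀) atTop (𝓝 1) := by
      apply Tendsto.congr' _ tendsto_const_nhds
      filter_upwards [eventually_ge_atTop (0:ℝ)] with s hs
      exact (hTA1 s hs).symm
    exact tendsto_nhds_unique hcoord h1
  -- eventually everywhere positive lower probability of A
  have hev2 : ∀ᶠ s in atTop, ∀ x : X, 0 < T s (ind A) x := by
    have hd := Metric.tendsto_nhds.mp hc 1 (by norm_num)
    filter_upwards [hd] with s hs x
    have := dist_le_pi_dist (T s (ind A)) (fun _ : X => c) x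
    have h2 : dist (T s (ind A) x) c < 1 := lt_of_le_of_lt this hs
    rw [Real.dist_eq, abs_lt, hc1] at h2
    linarith [h2.1]
  obtain ⟨sstar, hsstar_pos, hsstar⟩ : ∃ s, 0 < s ∧ ∀ x : X, 0 < T s (ind A) x := by
    obtain ⟨s, h1, h2⟩ := ((eventually_gt_atTop 0).and hev2).exists
    exact ⟨s, h1, h2⟩
  -- the lower-reach closure of A is everything
  obtain ⟨n, hstable⟩ := exists_stable (Q := Q) A
  have hall : ∀ x : X, x ∈ (lowerStep Q)^[n] A := by
    intro x
    by_contra hx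
    have h0 := lower_invariant hQ hT hstable hx sstar (le_of_lt hsstar_pos)
    have hle : T sstar (ind A) x ≤ T sstar (ind ((lowerStep Q)^[n] A)) x :=
      Tmono hQ hT (ind_mono (iterate_lowerStep_subset A n)) sstar (le_of_lt hsstar_pos) x
    rw [h0] at hle
    exact absurd (lt_of_lt_of_le (hsstar x) hle) (lt_irrefl 0)
  constructor
  · exact ⟨x₀, hx₀A⟩
  · intro x _
    exact lowerStep_pos hQ hT A n x (hall x) t ht

end Main

section Suff
variable {X : Type*} [Fintype X] [Nonempty X] {Q : (X → ℝ) → (X → ℝ)}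
  {T : ℝ → (X → ℝ) → (X → ℝ)} (hQ : IsLTRO Q) (hT : IsSol Q T)

include hQ hT

lemma minf_T_mono (f : X → ℝ) {a b : ℝ} (ha : 0 ≤ a) (hab : a ≤ b) :
    minf (T a f) ≤ minf (T b f) := by
  have hsplit : b = a + (b - a) := by ring
  rw [hsplit, Tadd hQ hT a (b - a) ha (by linarith)]
  exact le_minf (fun x => Tmin hQ hT (T a f) (b - a) (by linarith) x)

lemma maxf_T_mono (f : X → ℝ) {a b : ℝ} (ha : 0 ≤ a) (hab : a ≤ b) :
    maxf (T b f) ≤ maxf (T a f) := by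
  have hsplit : b = a + (b - a) := by ring
  rw [hsplit, Tadd hQ hT a (b - a) ha (by linarith)]
  exact maxf_le (fun x => Tmax hQ hT (T a f) (b - a) (by linarith) x)

lemma sufficiency (habs : OneStepAbs (T t)) (ht : 0 < t) : ErgodicQ T := by
  classical
  set A : Set X := X1A (T t) with hA
  -- uniform absorption constant
  have hεpos : 0 < minf (T t (ind A)) := by
    obtain ⟨x₁, hx₁⟩ := exists_minf (T t (ind A))
    rw [hx₁]
    by_cases hx₁A : x₁ ∈ A
    · exact T_persist_pos hQ hT (ind_nonneg _) (by rw [ind_of_mem hx₁A]; norm_num)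
        t (le_of_lt ht)
    · exact habs.2 x₁ hx₁A
  set ε : ℝ := minf (T t (ind A)) with hε
  intro f
  set m : ℝ → ℝ := fun s => minf (T s f) with hm
  set M : ℝ → ℝ := fun s => maxf (T s f) with hM
  -- subsequence limit g
  set seq : ℕ → X → ℝ := fun k => T ((k : ℝ) * t) f with hseq
  have hktnn : ∀ k : ℕ, (0:ℝ) ≤ (k:ℝ) * t := fun k =>
    mul_nonneg (Nat.cast_nonneg k) (le_of_lt ht)
  have hmem : ∀ k : ℕ, seq k ∈ Metric.closedBall (0 : X → ℝ) ‖f‖ := by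
    intro k
    rw [Metric.mem_closedBall, dist_zero_right]
    exact Tbdd hQ hT f _ (hktnn k)
  obtain ⟨g, hgmem, φ, hφmono, hφtend⟩ :=
    (isCompact_closedBall (0 : X → ℝ) ‖f‖).tendsto_subseq hmem
  have hdist0 : Tendsto (fun j => dist (seq (φ j)) g) atTop (𝓝 0) :=
    tendsto_iff_dist_tendsto_zero.mp hφtend
  set c₁ : ℝ := minf g with hc₁
  set c₂ : ℝ := maxf g with hc₂
  -- convergence of min/max along the subsequence
  have hminconv : Tendsto (fun j => m ((φ j : ℝ) * t)) atTop (𝓝 c₁) := by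
    rw [tendsto_iff_dist_tendsto_zero]
    apply squeeze_zero (fun j => dist_nonneg)
      (fun j => ?_) hdist0
    rw [Real.dist_eq, dist_eq_norm]
    exact minf_lip _ _
  have hmaxconv : Tendsto (fun j => M ((φ j : ℝ) * t)) atTop (𝓝 c₂) := by
    rw [tendsto_iff_dist_tendsto_zero]
    apply squeeze_zero (fun j => dist_nonneg)
      (fun j => ?_) hdist0
    rw [Real.dist_eq, dist_eq_norm]
    exact maxf_lip _ _
  -- the subsequence times tend to infinity
  have hφt : Tendsto (fun j => (φ j : ℝ) * t) atTop atTop :=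
    (tendsto_natCast_atTop_atTop.comp hφmono.tendsto_atTop).atTop_mul_const ht
  -- monotone bounds
  have hmono_sub : Monotone (fun j => m ((φ j : ℝ) * t)) := by
    intro i j hij
    apply minf_T_mono hQ hT f (hktnn (φ i))
    have := hφmono.monotone hij
    have h2 : (φ i : ℝ) ≤ (φ j : ℝ) := by exact_mod_cast this
    nlinarith
  have hanti_sub : Antitone (fun j => M ((φ j : ℝ) * t)) := by
    intro i j hij
    apply maxf_T_mono hQ hT f (hktnn (φ i))
    have := hφmono.monotone hij
    have h2 : (φ i : ℝ) ≤ (φ j : ℝ) := by exact_mod_cast this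
    nlinarith
  have key1 : ∀ s, 0 ≤ s → m s ≤ c₁ := by
    intro s hs
    obtain ⟨j, hj⟩ := (hφt.eventually_ge_atTop s).exists
    calc m s ≤ m ((φ j : ℝ) * t) := minf_T_mono hQ hT f hs hj
    _ ≤ c₁ := hmono_sub.ge_of_tendsto hminconv j
  have key2 : ∀ s, 0 ≤ s → c₂ ≤ M s := by
    intro s hs
    obtain ⟨j, hj⟩ := (hφt.eventually_ge_atTop s).exists
    calc c₂ ≤ M ((φ j : ℝ) * t) := hanti_sub.le_of_tendsto hmaxconv j
    _ ≤ M s := maxf_T_mono hQ hT f hs hj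
  -- limits for T t g
  have htg : Tendsto (fun j => T t (seq (φ j))) atTop (𝓝 (T t g)) := by
    rw [tendsto_iff_dist_tendsto_zero]
    apply squeeze_zero (fun j => dist_nonneg) (fun j => ?_) hdist0
    rw [dist_eq_norm, dist_eq_norm]
    exact Tnonexp hQ hT _ _ t (le_of_lt ht)
  have hTtseq : ∀ j, T t (seq (φ j)) = T ((φ j : ℝ) * t + t) f := by
    intro j
    rw [Tadd hQ hT ((φ j : ℝ) * t) t (hktnn (φ j)) (le_of_lt ht) f]
  have hminTtg : minf (T t g) = c₁ := by
    have h1 : Tendsto (fun j => minf (T t (seq (φ j)))) atTop (𝓝 (minf (T t g))) := by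
      rw [tendsto_iff_dist_tendsto_zero]
      apply squeeze_zero (fun j => dist_nonneg) (fun j => ?_)
        (tendsto_iff_dist_tendsto_zero.mp htg)
      rw [Real.dist_eq, dist_eq_norm]
      exact minf_lip _ _
    have h2 : Tendsto (fun j => minf (T t (seq (φ j)))) atTop (𝓝 c₁) := by
      have hlo : ∀ j, m ((φ j : ℝ) * t) ≤ minf (T t (seq (φ j))) := by
        intro j
        rw [hTtseq j]
        exact minf_T_mono hQ hT f (hktnn (φ j)) (by linarith)
      have hhi : ∀ j, minf (T t (seq (φ j))) ≤ c₁ := by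
        intro j
        rw [hTtseq j]
        exact key1 _ (by have := hktnn (φ j); linarith)
      exact tendsto_of_tendsto_of_tendsto_of_le_of_le hminconv tendsto_const_nhds hlo hhi
    exact tendsto_nhds_unique h1 h2
  have hmaxTtg : maxf (T t g) = c₂ := by
    have h1 : Tendsto (fun j => maxf (T t (seq (φ j)))) atTop (𝓝 (maxf (T t g))) := by
      rw [tendsto_iff_dist_tendsto_zero]
      apply squeeze_zero (fun j => dist_nonneg) (fun j => ?_)
        (tendsto_iff_dist_tendsto_zero.mp htg)
      rw [Real.dist_eq, dist_eq_norm]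
      exact maxf_lip _ _
    have h2 : Tendsto (fun j => maxf (T t (seq (φ j)))) atTop (𝓝 c₂) := by
      have hlo : ∀ j, c₂ ≤ maxf (T t (seq (φ j))) := by
        intro j
        rw [hTtseq j]
        exact key2 _ (by have := hktnn (φ j); linarith)
      have hhi : ∀ j, maxf (T t (seq (φ j))) ≤ M ((φ j : ℝ) * t) := by
        intro j
        rw [hTtseq j]
        exact maxf_T_mono hQ hT f (hktnn (φ j)) (by linarith)
      exact tendsto_of_tendsto_of_tendsto_of_le_of_le tendsto_const_nhds hmaxconv hlo hhi
    exact tendsto_nhds_unique h1 h2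
  -- core: c₂ ≤ c₁
  have hcore : c₂ ≤ c₁ := by
    by_contra hρ
    push_neg at hρ
    set ρ : ℝ := c₂ - c₁ with hρdef
    have hρpos : 0 < ρ := by rw [hρdef]; linarith
    set D : Set X := {w | g w = c₂} with hD
    obtain ⟨z, hz⟩ := exists_maxf (T t g)
    have hzc₂ : T t g z = c₂ := by rw [← hz, hmaxTtg]
    by_cases hDuniv : ∀ w, w ∈ D
    · obtain ⟨w₀, hw₀⟩ := exists_minf g
      have : g w₀ = c₂ := hDuniv w₀
      rw [hc₁, hw₀] at hρ
      rw [this] at hρ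
      exact absurd hρ (lt_irrefl c₂)
    · push_neg at hDuniv
      obtain ⟨w₁, hw₁⟩ := hDuniv
      set DF : Finset X := Finset.univ.filter (· ∉ D) with hDF
      have hDFne : DF.Nonempty := ⟨w₁, by simp [hDF, hw₁]⟩
      set β : ℝ := DF.sup' hDFne g with hβ
      have hβlt : β < c₂ := by
        rw [hβ, Finset.sup'_lt_iff]
        intro w hw
        have hwD : w ∉ D := by simpa [hDF] using hw
        have h1 : g w ≤ c₂ := le_maxf g w
        rcases lt_or_eq_of_le h1 with h | h
        · exact h
        · exact absurd h hwD
      have hgle : g ≤ ((c₂ - β) • ind D) + fun _ => β := by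
        intro w
        by_cases hw : w ∈ D
        · rw [Pi.add_apply, Pi.smul_apply, ind_of_mem hw]
          have : g w = c₂ := hw
          rw [this]; simp
        · rw [Pi.add_apply, Pi.smul_apply, ind_of_not_mem hw]
          have : g w ≤ β := Finset.le_sup' g (by simp [hDF, hw])
          simpa using this
      have hTgle : T t g z ≤ (c₂ - β) * T t (ind D) z + β := by
        have h1 := Tmono hQ hT hgle t (le_of_lt ht) z
        rw [Tconst_add hQ hT _ β t (le_of_lt ht),
          Tsmul hQ hT (by linarith : (0:ℝ) ≤ c₂ - β) (ind D) t (le_of_lt ht)] at h1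
        simpa using h1
      have hTD1 : 1 ≤ T t (ind D) z := by
        rw [hzc₂] at hTgle
        have hc2β : 0 < c₂ - β := by linarith
        nlinarith
      have hAD : A ⊆ D := by
        intro a haA
        by_contra haD
        have hmin : 0 < minf (conjOp (T t) (ind {a})) := haA
        have h1 : 0 < conjOp (T t) (ind {a}) z := lt_of_lt_of_le hmin (minf_le _ z)
        have h2 : ind ({a} : Set X) ≤ ind Dᶜ :=
          ind_mono (by intro v hv; rw [Set.mem_singleton_iff] at hv; subst hv; exact haD)
        have h3 : conjOp (T t) (ind {a}) z ≤ conjOp (T t) (ind Dᶜ) z :=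
          cT_mono hQ hT h2 t (le_of_lt ht) z
        have h4 : T t (ind D) z = 1 - conjOp (T t) (ind Dᶜ) z :=
          T_compl hQ hT D t (le_of_lt ht) z
        have h5 : conjOp (T t) (ind Dᶜ) z ≤ 0 := by linarith
        linarith
      have hgge : ((c₂ - c₁) • ind D) + (fun _ => c₁) ≤ g := by
        intro w
        by_cases hw : w ∈ D
        · rw [Pi.add_apply, Pi.smul_apply, ind_of_mem hw]
          have : g w = c₂ := hw
          rw [this]; simp
        · rw [Pi.add_apply, Pi.smul_apply, ind_of_not_mem hw]
          have : c₁ ≤ g w := minf_le g w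
          simpa using this
      have hfin : c₁ + ρ * ε ≤ minf (T t g) := by
        apply le_minf
        intro x
        have h1 := Tmono hQ hT hgge t (le_of_lt ht) x
        rw [Tconst_add hQ hT _ c₁ t (le_of_lt ht),
          Tsmul hQ hT (by linarith : (0:ℝ) ≤ c₂ - c₁) (ind D) t (le_of_lt ht)] at h1
        simp only [Pi.add_apply, Pi.smul_apply, smul_eq_mul] at h1
        have h2 : T t (ind A) x ≤ T t (ind D) x := Tmono hQ hT (ind_mono hAD) t (le_of_lt ht) x
        have h3 : ε ≤ T t (ind A) x := minf_le _ x
        have h4 : ρ * ε ≤ (c₂ - c₁) * T t (ind D) x := by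
          rw [hρdef]
          nlinarith
        linarith
      rw [hminTtg] at hfin
      nlinarith
  -- conclusion
  have hc₁₂ : c₁ = c₂ := le_antisymm (by
    obtain ⟨x', hx'⟩ := exists_minf g
    obtain ⟨x'', hx''⟩ := exists_maxf g
    calc c₁ = g x' := hx'
    _ ≤ maxf g := le_maxf g x'
    _ = c₂ := rfl) hcore
  refine ⟨c₁, ?_⟩
  rw [Metric.tendsto_atTop]
  intro δ hδ
  have hev1 : ∀ᶠ j in atTop, c₁ - δ/2 < m ((φ j : ℝ) * t) :=
    hminconv.eventually (eventually_gt_nhds (by linarith))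
  have hev2 : ∀ᶠ j in atTop, M ((φ j : ℝ) * t) < c₁ + δ/2 := by
    rw [hc₁₂]
    exact hmaxconv.eventually (eventually_lt_nhds (by linarith))
  obtain ⟨j, hj1, hj2⟩ := (hev1.and hev2).exists
  refine ⟨(φ j : ℝ) * t, ?_⟩
  intro s hs
  have hs0 : 0 ≤ s := le_trans (hktnn (φ j)) hs
  rw [dist_pi_lt_iff hδ]
  intro x
  rw [Real.dist_eq, abs_lt]
  have hml : m ((φ j : ℝ) * t) ≤ m s := minf_T_mono hQ hT f (hktnn (φ j)) hs
  have hMu : M s ≤ M ((φ j : ℝ) * t) := maxf_T_mono hQ hT f (hktnn (φ j)) hs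
  have hlo : m s ≤ T s f x := minf_le _ x
  have hhi : T s f x ≤ M s := le_maxf _ x
  constructor <;> [linarith; linarith]

end Suff

/-- For any `t > 0`, `Q` is ergodic iff `T_t` is 1-step absorbing. -/
theorem stmt6 {X : Type*} [Fintype X] [Nonempty X]
    (Q : (X → ℝ) → (X → ℝ)) (hQ : IsLTRO Q)
    (T : ℝ → (X → ℝ) → (X → ℝ)) (hT : IsSol Q T)
    (t : ℝ) (ht : 0 < t) :
    ErgodicQ T ↔ OneStepAbs (T t) := by
  constructor
  · intro herg
    exact necessity hQ hT herg ht
  · intro habs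
    exact sufficiency hQ hT habs ht
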